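/- Let M be symmetric positive definite, D⁺ a matrix, γ = 1 - √2/2, c > 0, and w₁, w₂ vectors. Then c·(γ‖D⁺w₁‖²_M + (1-2γ)(D⁺w₁, D⁺w₂)_M + γ‖D⁺w₂‖²_M) ≥ (cγ/4)(‖D⁺w₁‖²_M + ‖D⁺w₂‖²_M). -/

import Mathlib

open Matrix

theorem stmt_13 {n : ℕ} (M Dp : Matrix (Fin n) (Fin n) ℝ)
    (hM : M.PosDef) (hMsym : M.IsSymm)
    (c : ℝ) (hc : 0 < c) (w1 w2 : Fin n → ℝ) :
    let γ : ℝ := 1 - Real.sqrt 2 / 2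
    c * γ / 4 * ((Dp *ᵥ w1) ⬝ᵥ (M *ᵥ (Dp *ᵥ w1)) + (Dp *ᵥ w2) ⬝ᵥ (M *ᵥ (Dp *ᵥ w2)))
      ≤ c * (γ * ((Dp *ᵥ w1) ⬝ᵥ (M *ᵥ (Dp *ᵥ w1)))
          + (1 - 2 * γ) * ((Dp *ᵥ w1) ⬝ᵥ (M *ᵥ (Dp *ᵥ w2)))
          + γ * ((Dp *ᵥ w2) ⬝ᵥ (M *ᵥ (Dp *ᵥ w2)))) := by
  intro γ
  set u := Dp *ᵥ w1 with hu
  set v := Dp *ᵥ w2 with hv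
  have hpsd := hM.posSemidef
  have qnn : ∀ x : Fin n → ℝ, 0 ≤ x ⬝ᵥ (M *ᵥ x) := by
    intro x
    have := hpsd.dotProduct_mulVec_nonneg x
    simpa using this
  have ha : 0 ≤ u ⬝ᵥ (M *ᵥ u) := qnn u
  have hd : 0 ≤ v ⬝ᵥ (M *ᵥ v) := qnn v
  have hsym : v ⬝ᵥ (M *ᵥ u) = u ⬝ᵥ (M *ᵥ v) := by
    rw [dotProduct_mulVec, ← mulVec_transpose, hMsym.eq, dotProduct_comm]
  have hsum : 0 ≤ u ⬝ᵥ (M *ᵥ u) + 2 * (u ⬝ᵥ (M *ᵥ v)) + v ⬝ᵥ (M *ᵥ v) := by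
    have h0 := qnn (u + v)
    simp only [mulVec_add, dotProduct_add, add_dotProduct, hsym] at h0
    linarith
  have h2 : Real.sqrt 2 ^ 2 = 2 := Real.sq_sqrt (by norm_num)
  have h2a : (1.4 : ℝ) ≤ Real.sqrt 2 := by
    nlinarith [Real.sqrt_nonneg 2]
  have h2b : Real.sqrt 2 ≤ 1.42 := by
    nlinarith [Real.sqrt_nonneg 2]
  have hγ : (2:ℝ)/7 ≤ γ := by simp only [γ]; linarith
  have hγ2 : γ ≤ 1/2 := by simp only [γ]; linarith
  nlinarith [mul_pos hc (sub_pos.mpr (lt_of_lt_of_le (by norm_num : (0:ℝ) < 2/7) hγ)),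
    mul_nonneg hc.le ha, mul_nonneg hc.le hd,
    mul_nonneg (mul_nonneg hc.le (by linarith : (0:ℝ) ≤ 7*γ/4 - 1/2)) ha,
    mul_nonneg (mul_nonneg hc.le (by linarith : (0:ℝ) ≤ 7*γ/4 - 1/2)) hd,
    mul_nonneg (mul_nonneg hc.le (by linarith : (0:ℝ) ≤ (1-2*γ)/2)) hsum]
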